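/- Let A be an associative unital ℂ-algebra with charged fermions (ψ_k), (ψ*_k) indexed by half-integers k ∈ ℤ + 1/2, and define the neutral fermions φ_m, φ̂_m for m ∈ ℤ. Then for every odd integer n ≥ 1 and every integer m ≥ 1, writing k = m − 1/2, one has the identity in A: (−1)^m · m^n · (φ_m φ_{−m} + φ̂_m φ̂_{−m}) = Σ_{i=0}^{n} C(n,i) · 2^{−i} · ( k^{n−i} · ψ_k ψ*_k − (−k−1)^{n−i} · ψ*_{−k−1} ψ_{−k−1} ), where the powers k^{n−i} and (−k−1)^{n−i} are rational numbers acting as scalars. (This is the mode-by-mode form of Lemma 3.4: summing over m > 0 yields E^B_n + Ê^B_n = Σ_{i=0}^{n} C(n,i) 2^{−i} E_{n−i}.) -/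

import Mathlib

/-!
STATEMENT 6. Charged fermions `ψ, ψs : ℤ → A` are indexed by half-integers via
`k = n + 1/2`.  The neutral fermions are `φ m = (1/√2)(ψ_{m-1/2} + (-1)^m ψ*_{-m-1/2})`
and `φ̂ m = (i/√2)(ψ_{m-1/2} - (-1)^m ψ*_{-m-1/2})`; in our indexing
`ψ_{m-1/2} = ψ (m-1)`, `ψ*_{m-1/2} = ψs (m-1)`, `ψ_{-m-1/2} = ψ (-m-1)`,
`ψ*_{-m-1/2} = ψs (-m-1)`.  Conclusion: for every odd `n ≥ 1` and every integer
`m ≥ 1`, with the half-integer `k = m - 1/2` (so `-k-1 = -m-1/2`),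
`(-1)^m m^n (φ_m φ_{-m} + φ̂_m φ̂_{-m})
   = Σ_{i=0}^n C(n,i) 2^{-i} (k^{n-i} ψ_k ψ*_k - (-k-1)^{n-i} ψ*_{-k-1} ψ_{-k-1})`.
-/
theorem stmt6 {A : Type*} [Ring A] [Algebra ℂ A]
    (ψ ψs : ℤ → A)
    (φ φh : ℤ → A)
    (hφ : ∀ m : ℤ, φ m =
      ((Real.sqrt 2 : ℂ))⁻¹ • (ψ (m - 1) + ((-1 : ℂ) ^ m) • ψs (-m - 1)))
    (hφh : ∀ m : ℤ, φh m =
      (Complex.I / (Real.sqrt 2 : ℂ)) • (ψ (m - 1) - ((-1 : ℂ) ^ m) • ψs (-m - 1))) :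
    ∀ n : ℕ, Odd n → 1 ≤ n → ∀ m : ℤ, 1 ≤ m →
      ((-1 : ℂ) ^ m * (m : ℂ) ^ n) • (φ m * φ (-m) + φh m * φh (-m)) =
        ∑ i ∈ Finset.range (n + 1),
          ((n.choose i : ℂ) / 2 ^ i) •
            ((((m : ℂ) - 1/2) ^ (n - i)) • (ψ (m - 1) * ψs (m - 1)) -
              ((-(m : ℂ) - 1/2) ^ (n - i)) • (ψs (-m - 1) * ψ (-m - 1))) := by
  intro n hn hn1 m hm
  set s : ℂ := ((Real.sqrt 2 : ℝ) : ℂ) with hs_def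
  have hss : s * s = 2 := by
    rw [hs_def]
    norm_cast
    rw [Real.mul_self_sqrt] <;> norm_num
  have c1 : s⁻¹ * s⁻¹ = 2⁻¹ := by rw [← mul_inv, hss]
  have c2 : (Complex.I / s) * (Complex.I / s) = -2⁻¹ := by
    rw [div_mul_div_comm, Complex.I_mul_I, hss]
    norm_num
  have hεneg : ((-1 : ℂ)) ^ (-m) = (-1 : ℂ) ^ m := by
    rw [zpow_neg, ← inv_zpow, inv_neg, inv_one]
  -- RHS computation
  have h1 : ∑ i ∈ Finset.range (n + 1),
      ((n.choose i : ℂ) / 2 ^ i) * (((m : ℂ) - 1/2) ^ (n - i)) = (m : ℂ) ^ n := by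
    have key : ∑ i ∈ Finset.range (n + 1),
        ((n.choose i : ℂ) / 2 ^ i) * (((m : ℂ) - 1/2) ^ (n - i))
        = ((1/2 : ℂ) + ((m : ℂ) - 1/2)) ^ n := by
      rw [add_pow]
      refine Finset.sum_congr rfl fun i _ => ?_
      rw [div_pow, one_pow]
      ring
    rw [key]
    norm_num
  have h2 : ∑ i ∈ Finset.range (n + 1),
      ((n.choose i : ℂ) / 2 ^ i) * ((-(m : ℂ) - 1/2) ^ (n - i)) = -((m : ℂ) ^ n) := by
    have key : ∑ i ∈ Finset.range (n + 1),
        ((n.choose i : ℂ) / 2 ^ i) * ((-(m : ℂ) - 1/2) ^ (n - i))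
        = ((1/2 : ℂ) + (-(m : ℂ) - 1/2)) ^ n := by
      rw [add_pow]
      refine Finset.sum_congr rfl fun i _ => ?_
      rw [div_pow, one_pow]
      ring
    rw [key, show (1/2 : ℂ) + (-(m : ℂ) - 1/2) = -(m : ℂ) by ring, Odd.neg_pow hn]
  have hRHS : ∑ i ∈ Finset.range (n + 1),
        ((n.choose i : ℂ) / 2 ^ i) •
          ((((m : ℂ) - 1/2) ^ (n - i)) • (ψ (m - 1) * ψs (m - 1)) -
            ((-(m : ℂ) - 1/2) ^ (n - i)) • (ψs (-m - 1) * ψ (-m - 1)))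
      = ((m : ℂ) ^ n) • (ψ (m - 1) * ψs (m - 1)) +
        ((m : ℂ) ^ n) • (ψs (-m - 1) * ψ (-m - 1)) := by
    have step : ∑ i ∈ Finset.range (n + 1),
        ((n.choose i : ℂ) / 2 ^ i) •
          ((((m : ℂ) - 1/2) ^ (n - i)) • (ψ (m - 1) * ψs (m - 1)) -
            ((-(m : ℂ) - 1/2) ^ (n - i)) • (ψs (-m - 1) * ψ (-m - 1)))
        = (∑ i ∈ Finset.range (n + 1),
            ((n.choose i : ℂ) / 2 ^ i) * (((m : ℂ) - 1/2) ^ (n - i))) •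
              (ψ (m - 1) * ψs (m - 1))
          - (∑ i ∈ Finset.range (n + 1),
            ((n.choose i : ℂ) / 2 ^ i) * ((-(m : ℂ) - 1/2) ^ (n - i))) •
              (ψs (-m - 1) * ψ (-m - 1)) := by
      rw [Finset.sum_smul, Finset.sum_smul, ← Finset.sum_sub_distrib]
      refine Finset.sum_congr rfl fun i _ => ?_
      rw [smul_sub, smul_smul, smul_smul]
    rw [step, h1, h2, neg_smul, sub_neg_eq_add]
  rw [hRHS, hφ m, hφ (-m), hφh m, hφh (-m), hεneg, neg_neg]
  rcases Int.even_or_odd m with he | ho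
  · have hε : (-1 : ℂ) ^ m = 1 := he.neg_one_zpow
    rw [hε]
    simp only [one_smul, one_mul, smul_mul_smul_comm, c1, c2]
    simp only [mul_add, add_mul, mul_sub, sub_mul, smul_add, smul_sub, smul_smul, neg_smul]
    module
  · have hε : (-1 : ℂ) ^ m = -1 := ho.neg_one_zpow
    rw [hε]
    simp only [neg_one_smul, neg_one_mul, smul_mul_smul_comm, c1, c2]
    simp only [mul_add, add_mul, mul_sub, sub_mul, smul_add, smul_sub, smul_smul, neg_smul,
      mul_neg, neg_mul, neg_neg, smul_neg, sub_neg_eq_add]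
    module
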